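/- Let ⊙ be a pseudo-multiplication on [0,∞], let ν be a σ-maxitive measure on a measurable space (E, 𝔅), let f : E → [0,∞] be measurable, and let r ∈ [0,∞). Then ∫_E (r ⊙ f) ⊙ dν = r ⊙ ∫_E f ⊙ dν, where r ⊙ f denotes the function x ↦ r ⊙ f(x). -/

import Mathlib

open scoped ENNReal
open Set

/-- A pseudo-multiplication on `[0,∞]`: associative, monotone in each argument,
continuous on `(0,∞) × [0,∞]`, with `s ↦ s ⊙ t` continuous on `(0,∞]`,
admitting a left identity, without zero divisors, and with `0` as annihilator. -/
structure PseudoMul where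
  op : ℝ≥0∞ → ℝ≥0∞ → ℝ≥0∞
  assoc : ∀ a b c, op (op a b) c = op a (op b c)
  mono_left : ∀ t, Monotone fun s => op s t
  mono_right : ∀ s, Monotone fun t => op s t
  continuousOn : ContinuousOn (fun p : ℝ≥0∞ × ℝ≥0∞ => op p.1 p.2) (Ioo 0 ⊤ ×ˢ univ)
  continuousOn_left : ∀ t, ContinuousOn (fun s => op s t) (Ioi 0)
  one : ℝ≥0∞
  one_op : ∀ t, op one t = t
  no_zero_divisors : ∀ s t, op s t = 0 → s = 0 ∨ t = 0
  zero_op : ∀ t, op 0 t = 0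
  op_zero : ∀ t, op t 0 = 0

/-- An element `t` is `⊙`-finite if `⨅_{s>0} s ⊙ t = 0`. -/
def PseudoMul.OFinite (P : PseudoMul) (t : ℝ≥0∞) : Prop :=
  ⨅ s ∈ Ioi (0 : ℝ≥0∞), P.op s t = 0

/-- `⊙` is non-degenerate if its left identity is `⊙`-finite. -/
def PseudoMul.Nondegenerate (P : PseudoMul) : Prop :=
  P.OFinite P.one

/-- A σ-maxitive measure: vanishes on `∅` and turns countable unions of
measurable sets into suprema. -/
def SigmaMaxitive {E : Type*} [MeasurableSpace E] (ν : Set E → ℝ≥0∞) : Prop :=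
  ν ∅ = 0 ∧ ∀ B : ℕ → Set E, (∀ n, MeasurableSet (B n)) →
    ν (⋃ n, B n) = ⨆ n, ν (B n)

/-- The idempotent `⊙`-integral `∫_B f ⊙ dν = ⨆_{t ∈ [0,∞)} t ⊙ ν(B ∩ {f > t})`. -/
noncomputable def idemInt {E : Type*} [MeasurableSpace E] (P : PseudoMul) (ν : Set E → ℝ≥0∞)
    (f : E → ℝ≥0∞) (B : Set E) : ℝ≥0∞ :=
  ⨆ t ∈ Iio (⊤ : ℝ≥0∞), P.op t (ν (B ∩ {x | t < f x}))

open Filter Topology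

lemma SigmaMaxitive.mono' {E : Type*} [MeasurableSpace E] {ν : Set E → ℝ≥0∞}
    (hν : SigmaMaxitive ν) {A C : Set E} (hA : MeasurableSet A) (hC : MeasurableSet C)
    (h : A ⊆ C) : ν A ≤ ν C := by
  have key := hν.2 (fun n => if n = 0 then A else C)
    (fun n => by split <;> assumption)
  have hU : (⋃ n, if n = 0 then A else C) = C := by
    apply subset_antisymm
    · refine iUnion_subset fun n => ?_
      split
      · exact h
      · exact subset_rfl
    · intro x hx
      exact mem_iUnion.2 ⟨1, by simpa using hx⟩
  rw [hU] at key
  rw [key]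
  exact le_iSup_of_le 0 (by simp)

lemma PseudoMul.continuousAt_op_right (P : PseudoMul) {s : ℝ≥0∞} (h0 : 0 < s) (ht : s < ⊤)
    (u : ℝ≥0∞) : ContinuousAt (fun t => P.op s t) u := by
  have hopen : IsOpen (Ioo (0:ℝ≥0∞) ⊤ ×ˢ (univ : Set ℝ≥0∞)) := isOpen_Ioo.prod isOpen_univ
  have hca : ContinuousAt (fun p : ℝ≥0∞ × ℝ≥0∞ => P.op p.1 p.2) (s, u) :=
    P.continuousOn.continuousAt (hopen.mem_nhds ⟨⟨h0, ht⟩, mem_univ _⟩)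
  exact hca.comp ((continuous_const.prodMk continuous_id).continuousAt)

lemma PseudoMul.op_iSup (P : PseudoMul) {s : ℝ≥0∞} (h0 : 0 < s) (ht : s < ⊤)
    {ι : Sort*} (g : ι → ℝ≥0∞) : P.op s (⨆ i, g i) = ⨆ i, P.op s (g i) :=
  Monotone.map_iSup_of_continuousAt (P.continuousAt_op_right h0 ht _) (P.mono_right s)
    (P.op_zero s)

lemma PseudoMul.op_le_of_forall_lt (P : PseudoMul) {c u S : ℝ≥0∞} (hc : 0 < c)
    (h : ∀ s ∈ Ioo 0 c, P.op s u ≤ S) : P.op c u ≤ S := by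
  have hnb : (𝓝[Ioo (0:ℝ≥0∞) c] c).NeBot := right_nhdsWithin_Ioo_neBot hc
  have htend : Tendsto (fun s => P.op s u) (𝓝[Ioo 0 c] c) (𝓝 (P.op c u)) :=
    (P.continuousOn_left u c hc).mono_left (nhdsWithin_mono c Ioo_subset_Ioi_self)
  exact le_of_tendsto htend (eventually_nhdsWithin_of_forall h)

/-- Homogeneity of the idempotent `⊙`-integral. -/
theorem idemInt_homogeneous {E : Type*} [MeasurableSpace E] (P : PseudoMul)
    (ν : Set E → ℝ≥0∞) (hν : SigmaMaxitive ν)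
    (f : E → ℝ≥0∞) (hf : Measurable f) (r : ℝ≥0∞) (hr : r < ⊤) :
    idemInt P ν (fun x => P.op r (f x)) univ = P.op r (idemInt P ν f univ) := by
  rcases eq_or_lt_of_le (zero_le : 0 ≤ r) with hr0 | hr0
  · -- r = 0
    rw [← hr0]
    have hzero : ∀ t : ℝ≥0∞, (univ : Set E) ∩ {x | t < P.op 0 (f x)} = ∅ := by
      intro t
      simp [P.zero_op]
    simp only [idemInt, P.zero_op, hzero, hν.1, P.op_zero]
    refine le_antisymm (iSup₂_le fun t ht => ?_) zero_le
    simp [hzero t, hν.1, P.op_zero]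
  · -- 0 < r < ⊤
    obtain ⟨D, hDc, hDd⟩ := TopologicalSpace.exists_countable_dense ℝ≥0∞
    obtain ⟨d, hd⟩ := hDc.exists_eq_range hDd.nonempty
    set B : ℝ≥0∞ → ℕ → Set E :=
      fun s n => if s < P.op r (d n) then {x | d n < f x} else ∅ with hB
    have hBmeas : ∀ s n, MeasurableSet (B s n) := by
      intro s n
      simp only [hB]
      split
      · exact measurableSet_lt measurable_const hf
      · exact MeasurableSet.empty
    have hAB : ∀ s : ℝ≥0∞, {x | s < P.op r (f x)} = ⋃ n, B s n := by
      intro s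
      apply subset_antisymm
      · intro x hx
        have hx' : s < P.op r (f x) := hx
        have hfx : 0 < f x := by
          rcases eq_or_lt_of_le (zero_le : 0 ≤ f x) with h0 | h0
          · exfalso
            rw [← h0, P.op_zero] at hx'
            exact (not_lt_of_ge (zero_le : 0 ≤ s)) hx'
          · exact h0
        have hnb : (𝓝[<] (f x)).NeBot := nhdsWithin_Iio_self_neBot' ⟨0, hfx⟩
        have htend : Tendsto (fun u => P.op r u) (𝓝[<] (f x)) (𝓝 (P.op r (f x))) :=
          ((P.continuousAt_op_right hr0 hr (f x)).continuousWithinAt)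
        have hev : ∀ᶠ u in 𝓝[<] (f x), s < P.op r u := htend.eventually (lt_mem_nhds hx')
        obtain ⟨a, ha, hsub⟩ := (mem_nhdsLT_iff_exists_Ioo_subset' hfx).1 hev
        obtain ⟨w, hw⟩ := exists_between (show a < f x from ha)
        obtain ⟨y, hyo, hyD⟩ := hDd.exists_mem_open isOpen_Ioo ⟨w, hw⟩
        rw [hd] at hyo
        obtain ⟨n, rfl⟩ := hyo
        refine mem_iUnion.2 ⟨n, ?_⟩
        have h1 : s < P.op r (d n) := hsub hyD
        have h2 : d n < f x := hyD.2
        simp only [hB, if_pos h1]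
        exact h2
      · refine iUnion_subset fun n => ?_
        simp only [hB]
        split
        · rename_i h1
          intro x hx
          have : P.op r (d n) ≤ P.op r (f x) := P.mono_right r (le_of_lt hx)
          exact lt_of_lt_of_le h1 this
        · exact empty_subset _
    have hAmeas : ∀ s : ℝ≥0∞, MeasurableSet {x | s < P.op r (f x)} := by
      intro s
      rw [hAB s]
      exact MeasurableSet.iUnion (hBmeas s)
    have hνA : ∀ s : ℝ≥0∞, ν {x | s < P.op r (f x)} = ⨆ n, ν (B s n) := by
      intro s
      rw [hAB s]
      exact hν.2 _ (hBmeas s)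
    -- rewrite RHS
    have hRHS : P.op r (idemInt P ν f univ)
        = ⨆ t ∈ Iio (⊤ : ℝ≥0∞), P.op (P.op r t) (ν (univ ∩ {x | t < f x})) := by
      unfold idemInt
      rw [P.op_iSup hr0 hr]
      refine iSup_congr fun t => ?_
      rw [P.op_iSup hr0 hr]
      exact iSup_congr fun _ => (P.assoc r t _).symm
    rw [hRHS]
    simp only [idemInt, univ_inter]
    apply le_antisymm
    · -- LHS ≤ T
      refine iSup₂_le fun s hs => ?_
      rcases eq_or_lt_of_le (zero_le : 0 ≤ s) with hs0 | hs0
      · rw [← hs0, P.zero_op]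
        exact zero_le
      · rw [hνA s, P.op_iSup hs0 hs]
        refine iSup_le fun n => ?_
        by_cases hdn : s < P.op r (d n)
        · rcases eq_or_lt_of_le (le_top : d n ≤ ⊤) with htop | hlt
          · have hBe : B s n = ∅ := by
              simp only [hB, if_pos hdn, htop]
              ext x
              simp
            rw [hBe, hν.1, P.op_zero]
            exact zero_le
          · refine le_trans ?_ (le_iSup₂_of_le (d n) hlt le_rfl)
            have hBe : B s n = {x | d n < f x} := if_pos hdn
            rw [hBe]
            exact P.mono_left _ (le_of_lt hdn)
        · have hBe : B s n = ∅ := if_neg hdn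
          rw [hBe, hν.1, P.op_zero]
          exact zero_le
    · -- T ≤ LHS
      refine iSup₂_le fun t ht => ?_
      rcases eq_or_lt_of_le (zero_le : 0 ≤ P.op r t) with hc | hc
      · rw [← hc, P.zero_op]
        exact zero_le
      · refine P.op_le_of_forall_lt hc fun s hs => ?_
        have hst : s < ⊤ := lt_of_lt_of_le hs.2 le_top
        refine le_trans ?_ (le_iSup₂_of_le s hst le_rfl)
        refine P.mono_right s ?_
        refine hν.mono' (measurableSet_lt measurable_const hf) (hAmeas s) ?_
        intro x hx
        have : P.op r t ≤ P.op r (f x) := P.mono_right r (le_of_lt hx)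
        exact lt_of_lt_of_le hs.2 this
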